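/- Let (X,d) be a compact metric space and (f_n) a sequence of continuous self-maps that is either finitely generated or converges uniformly to a map f. Then for every k ∈ ℕ, the system (X, f_{1,∞}) is Kato chaotic (sensitive and accessible) if and only if the k-th iterate system (X, f_{1,∞}^{[k]}) is Kato chaotic. -/

import Mathlib

open Filter

variable {X : Type*}

/-- `orb f n = f_n ∘ ⋯ ∘ f_1` (0-based: `f k` is the `(k+1)`-st map). -/
def orb (f : ℕ → X → X) : ℕ → X → X
  | 0 => id
  | n + 1 => f n ∘ orb f n

/-- Sensitivity of the non-autonomous system along the time sequence `τ`. -/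
def Sensitive [MetricSpace X] (f : ℕ → X → X) (τ : ℕ → ℕ) : Prop :=
  ∃ δ > 0, ∀ U : Set X, IsOpen U → U.Nonempty →
    ∃ x ∈ U, ∃ y ∈ U, ∃ n : ℕ, δ < dist (orb f (τ n) x) (orb f (τ n) y)

/-- Accessibility of the non-autonomous system along the time sequence `τ`. -/
def Accessible [MetricSpace X] (f : ℕ → X → X) (τ : ℕ → ℕ) : Prop :=
  ∀ ε : ℝ, 0 < ε → ∀ U V : Set X, IsOpen U → U.Nonempty → IsOpen V → V.Nonempty →
    ∃ x ∈ U, ∃ y ∈ V, ∃ n : ℕ, dist (orb f (τ n) x) (orb f (τ n) y) < ε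

/-- Kato's chaos = sensitivity + accessibility. -/
def KatoChaos [MetricSpace X] (f : ℕ → X → X) (τ : ℕ → ℕ) : Prop :=
  Sensitive f τ ∧ Accessible f τ

/-- A finite family of continuous maps on a compact metric space is uniformly
equicontinuous. -/
lemma uc_finset [MetricSpace X] [CompactSpace X]
    (S : Finset (X → X)) (h : ∀ g ∈ S, Continuous g) {ε : ℝ} (hε : 0 < ε) :
    ∃ δ > 0, ∀ g ∈ S, ∀ x y : X, dist x y < δ → dist (g x) (g y) < ε := by
  classical
  induction S using Finset.induction_on with
  | empty => exact ⟨1, one_pos, by simp⟩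
  | @insert g S hgS ih =>
    obtain ⟨δ₁, hδ₁, H1⟩ := ih (fun g' hg' => h g' (Finset.mem_insert_of_mem hg'))
    obtain ⟨δ₂, hδ₂, H2⟩ := Metric.uniformContinuous_iff.mp
      (CompactSpace.uniformContinuous_of_continuous (h g (Finset.mem_insert_self _ _))) ε hε
    refine ⟨min δ₁ δ₂, lt_min hδ₁ hδ₂, fun g' hg' x y hxy => ?_⟩
    rcases Finset.mem_insert.mp hg' with rfl | hg'
    · exact H2 (hxy.trans_le (min_le_right _ _))
    · exact H1 g' hg' x y (hxy.trans_le (min_le_left _ _))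

/-- Uniform equicontinuity of the family `f n` under the generation hypothesis. -/
lemma equi_family [MetricSpace X] [CompactSpace X] (f : ℕ → X → X)
    (hf : ∀ n, Continuous (f n))
    (hgen : (∃ F : Set (X → X), F.Finite ∧ (∀ g ∈ F, Continuous g) ∧ ∀ n, f n ∈ F) ∨
      (∃ g : X → X, TendstoUniformly f g atTop)) {ε : ℝ} (hε : 0 < ε) :
    ∃ δ > 0, ∀ (n : ℕ) (x y : X), dist x y < δ → dist (f n x) (f n y) < ε := by
  classical
  rcases hgen with ⟨F, hFfin, hFc, hmem⟩ | ⟨g, hg⟩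
  · obtain ⟨δ, hδ, H⟩ := uc_finset hFfin.toFinset
      (fun g hg => hFc g (hFfin.mem_toFinset.mp hg)) hε
    exact ⟨δ, hδ, fun n x y h => H _ (hFfin.mem_toFinset.mpr (hmem n)) x y h⟩
  · have hgc : Continuous g := hg.continuous (Eventually.of_forall hf).frequently
    obtain ⟨δg, hδg, Hg⟩ := Metric.uniformContinuous_iff.mp
      (CompactSpace.uniformContinuous_of_continuous hgc) (ε / 3) (by positivity)
    have hunif := Metric.tendstoUniformly_iff.mp hg (ε / 3) (by positivity)
    obtain ⟨N, hN⟩ := eventually_atTop.mp hunif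
    obtain ⟨δ₁, hδ₁, H1⟩ := uc_finset ((Finset.range N).image f)
      (by rintro g' hg'; obtain ⟨n, -, rfl⟩ := Finset.mem_image.mp hg'; exact hf n) hε
    refine ⟨min δ₁ δg, lt_min hδ₁ hδg, fun n x y hxy => ?_⟩
    rcases lt_or_ge n N with hn | hn
    · exact H1 (f n) (Finset.mem_image.mpr ⟨n, Finset.mem_range.mpr hn, rfl⟩) x y
        (hxy.trans_le (min_le_left _ _))
    · have h1 := hN n hn x
      have h2 := hN n hn y
      have h3 := Hg (hxy.trans_le (min_le_right _ _))
      calc dist (f n x) (f n y)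
          ≤ dist (f n x) (g x) + dist (g x) (g y) + dist (g y) (f n y) :=
            dist_triangle4 _ _ _ _
        _ < ε / 3 + ε / 3 + ε / 3 := by
            rw [dist_comm (f n x) (g x)]
            exact add_lt_add (add_lt_add h1 h3) h2
        _ = ε := by ring

/-- If two orbits are close at time `m`, they remain close at time `m + r`
for any `r ≤ R`, with a uniform modulus. -/
lemma comp_close [MetricSpace X] [CompactSpace X] (f : ℕ → X → X)
    (hf : ∀ n, Continuous (f n))
    (hgen : (∃ F : Set (X → X), F.Finite ∧ (∀ g ∈ F, Continuous g) ∧ ∀ n, f n ∈ F) ∨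
      (∃ g : X → X, TendstoUniformly f g atTop)) :
    ∀ R : ℕ, ∀ ε : ℝ, 0 < ε → ∃ δ > 0, ∀ r ≤ R, ∀ (m : ℕ) (x y : X),
      dist (orb f m x) (orb f m y) < δ →
      dist (orb f (m + r) x) (orb f (m + r) y) < ε := by
  intro R
  induction R with
  | zero =>
    intro ε hε
    refine ⟨ε, hε, fun r hr m x y h => ?_⟩
    obtain rfl : r = 0 := Nat.le_zero.mp hr
    simpa using h
  | succ R ih =>
    intro ε hε
    obtain ⟨δ₁, hδ₁, H1⟩ := equi_family f hf hgen hε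
    obtain ⟨δ₂, hδ₂, H2⟩ := ih ε hε
    obtain ⟨δ₃, hδ₃, H3⟩ := ih δ₁ hδ₁
    refine ⟨min δ₂ δ₃, lt_min hδ₂ hδ₃, fun r hr m x y h => ?_⟩
    rcases Nat.lt_or_ge r (R + 1) with h' | h'
    · exact H2 r (Nat.lt_succ_iff.mp h') m x y (h.trans_le (min_le_left _ _))
    · obtain rfl : r = R + 1 := le_antisymm hr h'
      have hstep : dist (orb f (m + R) x) (orb f (m + R) y) < δ₁ :=
        H3 R le_rfl m x y (h.trans_le (min_le_right _ _))
      exact H1 (m + R) _ _ hstep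

theorem stmt_10 [MetricSpace X] [CompactSpace X] (f : ℕ → X → X)
    (hf : ∀ n, Continuous (f n))
    (hgen : (∃ F : Set (X → X), F.Finite ∧ (∀ g ∈ F, Continuous g) ∧ ∀ n, f n ∈ F) ∨
      (∃ g : X → X, TendstoUniformly f g atTop))
    (k : ℕ) (hk : 0 < k) :
    KatoChaos f id ↔ KatoChaos f (fun n => k * n) := by
  constructor
  · rintro ⟨⟨δ, hδ, hsen⟩, hacc⟩
    constructor
    · -- sensitivity along multiples of k
      obtain ⟨δ₀, hδ₀, H⟩ := comp_close f hf hgen (k - 1) δ hδ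
      refine ⟨δ₀ / 2, by positivity, fun U hU hUne => ?_⟩
      obtain ⟨x, hx, y, hy, n, hn⟩ := hsen U hU hUne
      refine ⟨x, hx, y, hy, n / k, ?_⟩
      show δ₀ / 2 < dist (orb f (k * (n / k)) x) (orb f (k * (n / k)) y)
      by_contra hcon
      push_neg at hcon
      have hmod : n % k < k := Nat.mod_lt _ hk
      have hr : n % k ≤ k - 1 := by omega
      have hclose : dist (orb f (k * (n / k)) x) (orb f (k * (n / k)) y) < δ₀ := by
        calc dist (orb f (k * (n / k)) x) (orb f (k * (n / k)) y) ≤ δ₀ / 2 := hcon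
          _ < δ₀ := by linarith
      have hfar := H (n % k) hr (k * (n / k)) x y hclose
      rw [Nat.div_add_mod n k] at hfar
      have hn' : δ < dist (orb f n x) (orb f n y) := hn
      linarith
    · -- accessibility along multiples of k
      intro ε hε U V hU hUne hV hVne
      obtain ⟨δ₀, hδ₀, H⟩ := comp_close f hf hgen (k - 1) ε hε
      obtain ⟨x, hx, y, hy, n, hn⟩ := hacc δ₀ hδ₀ U V hU hUne hV hVne
      have hn' : dist (orb f n x) (orb f n y) < δ₀ := hn
      have hmod : n % k < k := Nat.mod_lt _ hk
      have hdm : k * (n / k) + n % k = n := Nat.div_add_mod n k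
      rcases Nat.eq_zero_or_pos (n % k) with hs | hs
      · refine ⟨x, hx, y, hy, n / k, ?_⟩
        show dist (orb f (k * (n / k)) x) (orb f (k * (n / k)) y) < ε
        have h0 : k * (n / k) = n := by omega
        rw [h0]
        have := H 0 (Nat.zero_le _) n x y hn'
        simpa using this
      · refine ⟨x, hx, y, hy, n / k + 1, ?_⟩
        show dist (orb f (k * (n / k + 1)) x) (orb f (k * (n / k + 1)) y) < ε
        have hrle : k - n % k ≤ k - 1 := by omega
        have := H (k - n % k) hrle n x y hn'
        have heq : n + (k - n % k) = k * (n / k + 1) := by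
          rw [Nat.mul_add, Nat.mul_one]
          omega
        rwa [heq] at this
  · rintro ⟨⟨δ, hδ, hsen⟩, hacc⟩
    refine ⟨⟨δ, hδ, fun U hU hne => ?_⟩, fun ε hε U V hU hUne hV hVne => ?_⟩
    · obtain ⟨x, hx, y, hy, n, hn⟩ := hsen U hU hne
      exact ⟨x, hx, y, hy, k * n, hn⟩
    · obtain ⟨x, hx, y, hy, n, hn⟩ := hacc ε hε U V hU hUne hV hVne
      exact ⟨x, hx, y, hy, k * n, hn⟩
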